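/- Validity of the block-permuted test statistic: under the hypotheses of the block permutation lemma (pairs (X_i,Y_i) mutually independent across i ∈ I, X_i independent of Y_i for each i, identical distributions within each block of z, and π a block-preserving bijection), for every measurable function T : ℝ^I × ℝ^I → ℝ the random variable T((X_{π(i)})_i, (Y_i)_i) has the same distribution as T((X_i)_i, (Y_i)_i). In particular, the distance covariance statistic computed from the block-permuted first graph and the second graph is equal in distribution to the statistic computed from the original pair. -/

import Mathlib

open MeasureTheory ProbabilityTheory

/-- Validity of the block-permuted test statistic: under the hypotheses of the block
permutation lemma (pairs `(X_i,Y_i)` mutually independent, `X_i ⟂ Y_i` for each `i`,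
identical distributions within each block of `z`, and `π` a block-preserving permutation),
every measurable statistic `T : ℝ^I × ℝ^I → ℝ` satisfies
`T((X_{π i})_i, (Y_i)_i) =ᵈ T((X_i)_i, (Y_i)_i)`; in particular this holds for the
distance covariance statistic computed from the block-permuted first graph. -/
theorem block_permuted_statistic_eq_dist {Ω I : Type*} [MeasurableSpace Ω] [Fintype I]
    {k : ℕ} (z : I → Fin k)
    (μ : Measure Ω) [IsProbabilityMeasure μ]
    (X Y : I → Ω → ℝ) (hX : ∀ i, Measurable (X i)) (hY : ∀ i, Measurable (Y i))
    (hpairs : iIndepFun (fun i ω => (X i ω, Y i ω)) μ)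
    (hXY : ∀ i, IndepFun (X i) (Y i) μ)
    (hXd : ∀ i j, z i = z j → μ.map (X i) = μ.map (X j))
    (hYd : ∀ i j, z i = z j → μ.map (Y i) = μ.map (Y j))
    (π : Equiv.Perm I) (hπ : ∀ i, z (π i) = z i) :
    ∀ T : (I → ℝ) × (I → ℝ) → ℝ, Measurable T →
      μ.map (fun ω => T ((fun i => X (π i) ω), (fun i => Y i ω))) =
        μ.map (fun ω => T ((fun i => X i ω), (fun i => Y i ω))) := by
  classical
  intro T hT
  set α : I → Measure ℝ := fun i => μ.map (X i) with hαdef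
  set β : I → Measure ℝ := fun i => μ.map (Y i) with hβdef
  haveI : ∀ i, IsProbabilityMeasure (α i) := fun i =>
    Measure.isProbabilityMeasure_map (hX i).aemeasurable
  haveI : ∀ i, IsProbabilityMeasure (β i) := fun i =>
    Measure.isProbabilityMeasure_map (hY i).aemeasurable
  have hV : ∀ i, Measurable (fun ω => (X i ω, Y i ω)) := fun i => (hX i).prodMk (hY i)
  have hJ : Measurable (fun ω (i : I) => (X i ω, Y i ω)) :=
    measurable_pi_lambda _ fun i => hV i
  -- joint law of the family of pairs is the product of the pair laws
  have hJlaw : μ.map (fun ω (i : I) => (X i ω, Y i ω))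
      = Measure.pi (fun i => (α i).prod (β i)) := by
    refine (Measure.pi_eq fun s hs => ?_).symm
    rw [Measure.map_apply hJ (MeasurableSet.univ_pi hs)]
    have hpre : (fun ω (i : I) => (X i ω, Y i ω)) ⁻¹' Set.pi Set.univ s
        = ⋂ i ∈ Finset.univ, (fun ω => (X i ω, Y i ω)) ⁻¹' s i := by
      ext ω; simp [Set.mem_pi]
    rw [hpre, hpairs.measure_inter_preimage_eq_mul Finset.univ (fun i _ => hs i)]
    refine Finset.prod_congr rfl fun i _ => ?_
    have hprod := (indepFun_iff_map_prod_eq_prod_map_map (hX i).aemeasurable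
      (hY i).aemeasurable).mp (hXY i)
    rw [← Measure.map_apply (hV i) (hs i), hprod]
  -- law of the split pair of vectors
  have hsplitmeas : Measurable (fun ω => ((fun i => X i ω), (fun i => Y i ω))) :=
    (measurable_pi_lambda _ fun i => hX i).prodMk (measurable_pi_lambda _ fun i => hY i)
  have hsplit : μ.map (fun ω => ((fun i => X i ω), (fun i => Y i ω)))
      = (Measure.pi α).prod (Measure.pi β) := by
    have hfun : (fun ω => ((fun i => X i ω), (fun i => Y i ω)))
        = (MeasurableEquiv.arrowProdEquivProdArrow ℝ ℝ I)
          ∘ (fun ω (i : I) => (X i ω, Y i ω)) := rfl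
    rw [hfun, ← Measure.map_map (MeasurableEquiv.measurable _) hJ, hJlaw,
      (measurePreserving_arrowProdEquivProdArrow ℝ ℝ I α β).map_eq]
  -- precomposition with π preserves the product measure, since blocks are preserved
  have hc : Measurable (fun (g : I → ℝ) i => g (π i)) :=
    measurable_pi_lambda _ fun i => measurable_pi_apply (π i)
  have hπα : (Measure.pi fun i => α (π.symm i)) = Measure.pi α := by
    congr 1
    funext i
    refine hXd _ _ ?_
    have h1 := hπ (π.symm i)
    rw [Equiv.apply_symm_apply] at h1
    exact h1.symm
  have hcoe : ⇑(MeasurableEquiv.piCongrLeft (fun _ : I => ℝ) π.symm)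
      = fun (g : I → ℝ) i => g (π i) := by
    funext g i
    rw [MeasurableEquiv.coe_piCongrLeft]
    conv_lhs => rw [show i = π.symm (π i) by simp]
    exact Equiv.piCongrLeft_apply_apply _ _ _ _
  have hmapα : (Measure.pi α).map (fun (g : I → ℝ) i => g (π i)) = Measure.pi α := by
    have h3 := (measurePreserving_piCongrLeft α π.symm).map_eq
    rw [hπα, hcoe] at h3
    exact h3
  -- law of the permuted split pair
  have hpermmeas : Measurable (fun ω => ((fun i => X (π i) ω), (fun i => Y i ω))) :=
    (measurable_pi_lambda _ fun i => hX (π i)).prodMk (measurable_pi_lambda _ fun i => hY i)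
  have hperm : μ.map (fun ω => ((fun i => X (π i) ω), (fun i => Y i ω)))
      = (Measure.pi α).prod (Measure.pi β) := by
    have hfun : (fun ω => ((fun i => X (π i) ω), (fun i => Y i ω)))
        = (Prod.map (fun (g : I → ℝ) i => g (π i)) id)
          ∘ (fun ω => ((fun i => X i ω), (fun i => Y i ω))) := rfl
    rw [hfun, ← Measure.map_map (hc.prodMap measurable_id) hsplitmeas, hsplit,
      ← Measure.map_prod_map _ _ hc measurable_id, hmapα, Measure.map_id]
  -- conclude by mapping through T
  calc μ.map (fun ω => T ((fun i => X (π i) ω), (fun i => Y i ω)))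
      = (μ.map (fun ω => ((fun i => X (π i) ω), (fun i => Y i ω)))).map T := by
        rw [Measure.map_map hT hpermmeas]; rfl
    _ = (μ.map (fun ω => ((fun i => X i ω), (fun i => Y i ω)))).map T := by
        rw [hperm, hsplit]
    _ = μ.map (fun ω => T ((fun i => X i ω), (fun i => Y i ω))) := by
        rw [Measure.map_map hT hsplitmeas]; rfl
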